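/- arXiv:1704.07051 — 3 statements merged into one kernel-verified Lean document; each statement's English description precedes it below -/
import Mathlib

section
/- Let p > 1, a ≥ 1, and q = (p−1)a + 2, and fix K₁ > 0. Then there exists a constant c₀ > 0, depending only on p, a, K₁ (in particular independent of M and T₀), with the following property: for all M ≥ 1, T₀ > 0 and K₀ ≥ c₀ there is no function G ∈ C²([0,∞)) satisfying, for all t ≥ T₀, both G(t) ≥ K₀(t+M)^a and G''(t) ≥ K₁(t+M)^{−q} G(t)^p. Equivalently, if G ∈ C²([0,T)) satisfies these two inequalities for t ∈ [T₀,T) with K₀ ≥ c₀, then T < ∞. -/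
open Set Real

lemma mvt_ge' {f : ℝ → ℝ} {x y m : ℝ} (hxy : x ≤ y)
    (hfc : ContinuousOn f (Set.Icc x y))
    (hfd : ∀ u ∈ Set.Ioo x y, DifferentiableAt ℝ f u)
    (hm : ∀ u ∈ Set.Ioo x y, m ≤ deriv f u) :
    f x + m * (y - x) ≤ f y := by
  have h1 : MonotoneOn (fun u => f u - m * u) (Set.Icc x y) := by
    apply monotoneOn_of_deriv_nonneg (convex_Icc x y)
    · exact hfc.sub ((continuous_const.mul continuous_id).continuousOn)
    · rw [interior_Icc]
      intro u hu
      exact ((hfd u hu).sub (by fun_prop)).differentiableWithinAt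
    · rw [interior_Icc]
      intro u hu
      have hd : deriv (fun u => f u - m * u) u = deriv f u - m := by
        rw [deriv_fun_sub (hfd u hu) (by fun_prop)]
        have : deriv (HMul.hMul m) u = m := by
          simpa using ((hasDerivAt_id u).const_mul m).deriv
        rw [this]
      rw [hd]
      linarith [hm u hu]
  have h2 := h1 (Set.left_mem_Icc.2 hxy) (Set.right_mem_Icc.2 hxy) hxy
  simp only at h2
  linarith

set_option maxHeartbeats 1000000 in
/-- Riccati-type blowup lemma (Lemma 2.1): for `p > 1`, `a ≥ 1`, `q = (p-1)a + 2` and a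
fixed `K₁ > 0`, there is `c₀ > 0` (independent of `M` and `T₀`) such that for all `M ≥ 1`,
`T₀ > 0` and `K₀ ≥ c₀` there is no `G ∈ C²([0,∞))` with `G(t) ≥ K₀(t+M)^a` and
`G''(t) ≥ K₁(t+M)^{-q} G(t)^p` for all `t ≥ T₀`. -/
theorem stmt2 (p a K₁ : ℝ) (hp : 1 < p) (ha : 1 ≤ a) (hK₁ : 0 < K₁) :
    ∃ c₀ > (0 : ℝ), ∀ M T₀ K₀ : ℝ, 1 ≤ M → 0 < T₀ → c₀ ≤ K₀ →
      ¬ ∃ G : ℝ → ℝ, ContDiffOn ℝ 2 G (Set.Ici 0) ∧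
        ∀ t : ℝ, T₀ ≤ t →
          K₀ * (t + M) ^ a ≤ G t ∧
          K₁ * (t + M) ^ (-((p - 1) * a + 2)) * G t ^ p ≤ deriv (deriv G) t := by
  have hpm : (0:ℝ) < p - 1 := by linarith
  set q : ℝ := (p - 1) * a + 2 with hq
  have hqpos : 0 < q := by nlinarith
  set r : ℝ := (2:ℝ) ^ ((1 - p)/2) with hr
  have hr0 : 0 < r := rpow_pos_of_pos two_pos _
  have hr1 : r < 1 := rpow_lt_one_of_one_lt_of_neg one_lt_two (by linarith)
  have hrr : (0:ℝ) < 1 - r := by linarith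
  set X : ℝ := 4 * 2 ^ q / (K₁ * (1 - r)^2) with hX
  have hXpos : 0 < X := by
    have h2q : (0:ℝ) < (2:ℝ) ^ q := rpow_pos_of_pos two_pos _
    positivity
  refine ⟨X ^ (1/(p-1)), rpow_pos_of_pos hXpos _, ?_⟩
  rintro M T₀ K₀ hM hT₀ hK₀ ⟨G, hG, hGhyp⟩
  have hc₀pos : 0 < X ^ (1/(p-1)) := rpow_pos_of_pos hXpos _
  have hK₀pos : 0 < K₀ := lt_of_lt_of_le hc₀pos hK₀
  -- q already abstracted by set
  -- regularity
  have hGc : ContinuousOn G (Set.Ici 0) := hG.continuousOn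
  have hGd : ∀ t : ℝ, 0 < t → DifferentiableAt ℝ G t := fun t ht =>
    (hG.contDiffAt (Ici_mem_nhds ht)).differentiableAt (by norm_num)
  have hG'cd : ContDiffOn ℝ 1 (deriv G) (Set.Ioi 0) :=
    (hG.mono Set.Ioi_subset_Ici_self).deriv_of_isOpen isOpen_Ioi (by norm_num)
  have hG'c : ContinuousOn (deriv G) (Set.Ioi 0) := hG'cd.continuousOn
  have hG'd : ∀ t : ℝ, 0 < t → DifferentiableAt ℝ (deriv G) t := fun t ht =>
    (hG'cd.differentiableOn (by norm_num)).differentiableAt (Ioi_mem_nhds ht)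
  -- positivity
  have hGpos : ∀ t, T₀ ≤ t → 0 < G t := by
    intro t ht
    have h1 : (0:ℝ) < t + M := by linarith
    exact lt_of_lt_of_le (mul_pos hK₀pos (rpow_pos_of_pos h1 a)) (hGhyp t ht).1
  have hD2 : ∀ t, T₀ ≤ t → 0 < deriv (deriv G) t := by
    intro t ht
    have h1 : (0:ℝ) < t + M := by linarith
    exact lt_of_lt_of_le
      (mul_pos (mul_pos hK₁ (rpow_pos_of_pos h1 _)) (rpow_pos_of_pos (hGpos t ht) p))
      (hGhyp t ht).2
  -- deriv G is monotone on [T₀, ∞)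
  have hmono' : MonotoneOn (deriv G) (Set.Ici T₀) := by
    apply monotoneOn_of_deriv_nonneg (convex_Ici T₀)
    · exact hG'c.mono (fun x hx => lt_of_lt_of_le hT₀ hx)
    · rw [interior_Ici]
      exact fun x hx => (hG'd x (hT₀.trans hx)).differentiableWithinAt
    · rw [interior_Ici]
      exact fun x hx => (hD2 x (le_of_lt hx)).le
  -- find T₁ with deriv G T₁ ≥ 0
  obtain ⟨T₁, hT₁mem, hT₁d⟩ : ∃ s, s ∈ Set.Icc T₀ (max T₀ (G T₀ / K₀ + 1)) ∧ 0 ≤ deriv G s := by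
    set T : ℝ := max T₀ (G T₀ / K₀ + 1) with hT
    have hTT₀ : T₀ ≤ T := le_max_left _ _
    have hGT : G T₀ < G T := by
      have h1 : G T₀ / K₀ + 1 ≤ T := le_max_right _ _
      have h2 : (1:ℝ) ≤ T + M := by linarith
      have h3 : (T + M) ^ (1:ℝ) ≤ (T + M) ^ a := rpow_le_rpow_of_exponent_le h2 ha
      rw [rpow_one] at h3
      have h4 : G T₀ / K₀ < T + M := by linarith
      have h5 : G T₀ < K₀ * (T + M) := by
        rw [div_lt_iff₀ hK₀pos] at h4
        linarith [h4]
      calc G T₀ < K₀ * (T + M) := h5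
        _ ≤ K₀ * (T + M) ^ a := by
            exact mul_le_mul_of_nonneg_left h3 hK₀pos.le
        _ ≤ G T := (hGhyp T hTT₀).1
    by_contra hcon
    push_neg at hcon
    have hanti : AntitoneOn G (Set.Icc T₀ T) := by
      apply antitoneOn_of_deriv_nonpos (convex_Icc _ _)
      · exact hGc.mono (fun x hx => le_trans hT₀.le hx.1)
      · rw [interior_Icc]
        exact fun x hx => (hGd x (lt_of_lt_of_le hT₀ hx.1.le)).differentiableWithinAt
      · rw [interior_Icc]
        intro x hx
        exact (hcon x ⟨hx.1.le, hx.2.le⟩).le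
    have := hanti (Set.left_mem_Icc.2 hTT₀) (Set.right_mem_Icc.2 hTT₀) hTT₀
    linarith
  have hT₁ : T₀ ≤ T₁ := hT₁mem.1
  have hT₁pos : 0 < T₁ := lt_of_lt_of_le hT₀ hT₁
  have hd0 : ∀ t, T₁ ≤ t → 0 ≤ deriv G t := fun t ht =>
    le_trans hT₁d (hmono' hT₁ (le_trans hT₁ ht) ht)
  have hGmono : MonotoneOn G (Set.Ici T₁) := by
    apply monotoneOn_of_deriv_nonneg (convex_Ici _)
    · exact hGc.mono (fun x hx => le_trans hT₁pos.le hx)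
    · rw [interior_Ici]
      exact fun x hx => (hGd x (hT₁pos.trans hx)).differentiableWithinAt
    · rw [interior_Ici]
      exact fun x hx => hd0 x hx.le
  -- constants
  set Y : ℝ := T₁ + M with hYdef
  have hYpos : (0:ℝ) < Y := by simp only [hYdef]; linarith
  set B : ℝ := 2 * Y with hBdef
  have hBpos : (0:ℝ) < B := by positivity
  set G₀ : ℝ := G T₁ with hG₀def
  have hG₀ : 0 < G₀ := hGpos T₁ hT₁
  have hG₀lb : K₀ * Y ^ a ≤ G₀ := (hGhyp T₁ hT₁).1
  set CC : ℝ := B ^ q / K₁ with hCC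
  have hCCpos : 0 < CC := div_pos (rpow_pos_of_pos hBpos _) hK₁
  -- the key step estimate
  have step : ∀ x h : ℝ, T₁ ≤ x → 0 ≤ h → x + 2*h ≤ T₁ + Y →
      G x + h * (h * (K₁ * B ^ (-q) * G x ^ p)) ≤ G (x + 2*h) := by
    intro x h hx hh hxh
    set m₂ : ℝ := K₁ * B ^ (-q) * G x ^ p with hm₂
    have hxpos : (0:ℝ) < x := lt_of_lt_of_le hT₁pos hx
    have hGxpos : 0 < G x := hGpos x (le_trans hT₁ hx)
    have hm₂pos : 0 < m₂ :=
      mul_pos (mul_pos hK₁ (rpow_pos_of_pos hBpos _)) (rpow_pos_of_pos hGxpos p)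
    -- lower bound for second derivative on (x, x+2h)
    have hlow : ∀ u, x < u → u < x + 2*h → m₂ ≤ deriv (deriv G) u := by
      intro u hu1 hu2
      have hux : T₀ ≤ u := le_trans (le_trans hT₁ hx) hu1.le
      have huM : 0 < u + M := by linarith [lt_of_lt_of_le hT₀ hux]
      have huB : u + M ≤ B := by
        simp only [hBdef, hYdef]
        have : u ≤ T₁ + Y := le_trans hu2.le hxh
        simp only [hYdef] at this
        linarith
      have h1 : B ^ (-q) ≤ (u + M) ^ (-q) :=
        rpow_le_rpow_of_nonpos huM huB (by linarith)
      have h2 : G x ^ p ≤ G u ^ p := by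
        apply rpow_le_rpow hGxpos.le _ (by linarith)
        exact hGmono hx (le_trans hx hu1.le) hu1.le
      have h3 : m₂ ≤ K₁ * (u + M) ^ (-q) * G u ^ p := by
        rw [hm₂]
        have := mul_le_mul (mul_le_mul_of_nonneg_left h1 hK₁.le) h2
          (rpow_nonneg hGxpos.le p) (by positivity)
        exact this
      exact le_trans h3 (hGhyp u hux).2
    -- first MVT: deriv G is at least h * m₂ on (x + h, x + 2h)
    have hfirst : ∀ s, x + h < s → s < x + 2*h → h * m₂ ≤ deriv G s := by
      intro s hs1 hs2
      have hxs : x ≤ s := by linarith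
      have hmvt := mvt_ge' (f := deriv G) (x := x) (y := s) (m := m₂) hxs
        (hG'c.mono (fun u hu => lt_of_lt_of_le hxpos hu.1))
        (fun u hu => hG'd u (lt_trans hxpos hu.1))
        (fun u hu => hlow u hu.1 (lt_trans hu.2 hs2))
      have hd0x : 0 ≤ deriv G x := hd0 x hx
      have h7 : m₂ * h ≤ m₂ * (s - x) := mul_le_mul_of_nonneg_left (by linarith) hm₂pos.le
      have h8 : h * m₂ = m₂ * h := by ring
      linarith
    -- second MVT
    have hsecond := mvt_ge' (f := G) (x := x + h) (y := x + 2*h) (m := h * m₂)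
      (by linarith)
      (hGc.mono (fun u hu => by
        have : x + h ≤ u := hu.1
        simp only [Set.mem_Ici]; linarith))
      (fun u hu => hGd u (by have := hu.1; simp only [Set.mem_Ioo] at hu; linarith))
      (fun u hu => by
        simp only [Set.mem_Ioo] at hu
        exact hfirst u hu.1 hu.2)
    have hGxh : G x ≤ G (x + h) := hGmono hx (by simp only [Set.mem_Ici]; linarith) (by linarith)
    have h9 : h * m₂ * (x + 2*h - (x + h)) = h * (h * m₂) := by ring
    linarith
  -- sequence
  obtain ⟨t, ht0, htsucc⟩ :
      ∃ t : ℕ → ℝ, t 0 = T₁ ∧ ∀ n, t (n+1) = t n + 2 * Real.sqrt (G (t n) ^ (1-p) * CC) :=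
    ⟨fun n => Nat.rec T₁ (fun _ tn => tn + 2 * Real.sqrt (G tn ^ (1-p) * CC)) n,
      rfl, fun n => rfl⟩
  set h₀ : ℝ := Real.sqrt (G₀ ^ (1-p) * CC) with hh₀
  have hh₀nonneg : 0 ≤ h₀ := Real.sqrt_nonneg _
  set D : ℝ := 2 * h₀ / (1 - r) with hD
  have hDnonneg : 0 ≤ D := by positivity
  have hDr : D * (1 - r) = 2 * h₀ := by
    rw [hD]; field_simp
  -- D ≤ Y
  have hDY : D ≤ Y := by
    have hA₀ : G₀ ^ (1-p) * CC ≤ ((1-r)/2 * Y)^2 := by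
      have h1 : G₀ ^ (1-p) ≤ (K₀ * Y ^ a) ^ (1-p) :=
        rpow_le_rpow_of_nonpos (by positivity) hG₀lb (by linarith)
      have h2 : (K₀ * Y ^ a) ^ (1-p) = K₀ ^ (1-p) * Y ^ (a*(1-p)) := by
        rw [mul_rpow hK₀pos.le (rpow_nonneg hYpos.le a), ← rpow_mul hYpos.le]
      have h3 : B ^ q = 2 ^ q * Y ^ q := by
        rw [hBdef, mul_rpow (by norm_num) hYpos.le]
      have h4 : K₀ ^ (1-p) ≤ (1 - r)^2 * K₁ / (4 * 2 ^ q) := by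
        have hXc : (X ^ (1/(p-1))) ^ (1-p) = X⁻¹ := by
          rw [← rpow_mul hXpos.le]
          have : 1/(p-1) * (1-p) = -1 := by field_simp; ring
          rw [this, rpow_neg_one]
        have h5 : K₀ ^ (1-p) ≤ (X ^ (1/(p-1))) ^ (1-p) :=
          rpow_le_rpow_of_nonpos hc₀pos hK₀ (by linarith)
        rw [hXc] at h5
        have h2q : (0:ℝ) < (2:ℝ) ^ q := rpow_pos_of_pos two_pos _
        have hXinv : X⁻¹ = (1 - r)^2 * K₁ / (4 * 2 ^ q) := by
          rw [hX]
          field_simp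
        rw [hXinv] at h5
        exact h5
      have hy2 : Y ^ (a*(1-p)) * Y ^ q = Y ^ (2:ℝ) := by
        rw [← rpow_add hYpos]
        congr 1
        rw [hq]; ring
      have h2q : (0:ℝ) < (2:ℝ) ^ q := rpow_pos_of_pos two_pos _
      calc G₀ ^ (1-p) * CC ≤ (K₀ ^ (1-p) * Y ^ (a*(1-p))) * CC := by
            rw [← h2]
            exact mul_le_mul_of_nonneg_right h1 hCCpos.le
        _ = (K₀ ^ (1-p) * 2 ^ q / K₁) * (Y ^ (a*(1-p)) * Y ^ q) := by
            rw [hCC, h3]; field_simp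
        _ ≤ ((1 - r)^2 * K₁ / (4 * 2 ^ q) * 2 ^ q / K₁) * (Y ^ (a*(1-p)) * Y ^ q) := by
            gcongr
        _ = ((1-r)^2/4) * (Y ^ (a*(1-p)) * Y ^ q) := by field_simp
        _ = ((1-r)/2 * Y)^2 := by rw [hy2, Real.rpow_two]; ring
    have h6 : h₀ ≤ (1-r)/2 * Y := by
      rw [hh₀]
      calc Real.sqrt (G₀ ^ (1-p) * CC) ≤ Real.sqrt (((1-r)/2 * Y)^2) :=
            Real.sqrt_le_sqrt hA₀
        _ = (1-r)/2 * Y := Real.sqrt_sq (by positivity)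
    rw [hD, div_le_iff₀ hrr]
    nlinarith
  -- induction invariant
  have key : ∀ n : ℕ, T₁ ≤ t n ∧ 2^n * G₀ ≤ G (t n) ∧ t n + D * r^n ≤ T₁ + D := by
    intro n
    induction n with
    | zero =>
      refine ⟨le_of_eq ht0.symm, by rw [ht0]; norm_num [hG₀def], by rw [ht0]; norm_num⟩
    | succ n ih =>
      obtain ⟨ih1, ih2, ih3⟩ := ih
      have htn0 : T₀ ≤ t n := le_trans hT₁ ih1
      have hGtn : 0 < G (t n) := hGpos _ htn0
      set hn : ℝ := Real.sqrt (G (t n) ^ (1-p) * CC) with hhn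
      have hnn : 0 ≤ hn := Real.sqrt_nonneg _
      have hpow : (0:ℝ) < 2^n * G₀ := by positivity
      have hb1 : G (t n) ^ (1-p) ≤ ((2:ℝ)^n * G₀) ^ (1-p) :=
        rpow_le_rpow_of_nonpos hpow ih2 (by linarith)
      have hb2 : ((2:ℝ)^n * G₀) ^ (1-p) = ((2:ℝ)^n) ^ (1-p) * G₀ ^ (1-p) :=
        mul_rpow (by positivity) hG₀.le
      have hb3 : Real.sqrt (((2:ℝ)^n) ^ (1-p)) = r ^ n := by
        have e1 : ((2:ℝ)^n) ^ (1-p) = (r ^ n)^2 := by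
          rw [hr, ← rpow_natCast (2:ℝ) n, ← rpow_mul (by norm_num : (0:ℝ) ≤ 2),
            ← rpow_natCast ((2:ℝ) ^ ((1-p)/2)) n, ← rpow_mul (by norm_num : (0:ℝ) ≤ 2),
            ← rpow_natCast ((2:ℝ) ^ ((1-p)/2 * (n:ℝ))) 2, ← rpow_mul (by norm_num : (0:ℝ) ≤ 2)]
          congr 1
          push_cast
          ring
        rw [e1, Real.sqrt_sq (pow_nonneg hr0.le n)]
      have hb4 : hn ≤ r^n * h₀ := by
        rw [hhn, hh₀]
        calc Real.sqrt (G (t n) ^ (1-p) * CC)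
            ≤ Real.sqrt (((2:ℝ)^n) ^ (1-p) * (G₀ ^ (1-p) * CC)) := by
              apply Real.sqrt_le_sqrt
              rw [← mul_assoc, ← hb2]
              exact mul_le_mul_of_nonneg_right hb1 hCCpos.le
          _ = r^n * Real.sqrt (G₀ ^ (1-p) * CC) := by
              rw [Real.sqrt_mul (by positivity), hb3]
      have e3 : 2*(r^n*h₀) + D*(r^n*r) = D*r^n := by
        rw [hD]
        field_simp
        ring
      have hpart2 : t n + 2*hn + D * r^(n+1) ≤ T₁ + D := by
        have e2 : D * r^(n+1) = D*(r^n*r) := by ring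
        rw [e2]
        have h2hn : 2*hn ≤ 2*(r^n*h₀) := by linarith
        linarith
      have hle : t n + 2*hn ≤ T₁ + Y := by
        have h5 : 0 ≤ D * r^(n+1) := mul_nonneg hDnonneg (pow_nonneg hr0.le _)
        linarith
      have hstep := step (t n) hn ih1 hnn hle
      have hsq2 : hn^2 = G (t n)^(1-p) * CC := Real.sq_sqrt (by positivity)
      have key2 : hn*(hn*(K₁*B^(-q)*G (t n)^p)) = G (t n) := by
        have h1 : hn * (hn * (K₁*B^(-q)*G (t n)^p)) = hn^2 * (K₁*B^(-q)*G (t n)^p) := by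
          ring
        rw [h1, hsq2, hCC]
        have e4 : (1-p)+p = (1:ℝ) := by ring
        have e5 : q + -q = (0:ℝ) := by ring
        calc G (t n)^(1-p) * (B^q/K₁) * (K₁ * B^(-q) * G (t n)^p)
            = (G (t n)^(1-p) * G (t n)^p) * (B^q * B^(-q)) * (K₁/K₁) := by ring
          _ = G (t n)^((1-p)+p) * B^(q + -q) * (K₁/K₁) := by
              rw [← rpow_add hGtn, ← rpow_add hBpos]
          _ = G (t n) := by
              rw [e4, e5, rpow_one, rpow_zero, div_self hK₁.ne']
              ring
      refine ⟨?_, ?_, ?_⟩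
      · rw [htsucc n, ← hhn]
        linarith
      · rw [htsucc n, ← hhn]
        rw [key2] at hstep
        have e6 : (2:ℝ)^(n+1) * G₀ = 2*((2:ℝ)^n*G₀) := by ring
        linarith
      · rw [htsucc n, ← hhn]
        exact hpart2
  -- conclusion: G is bounded on the compact interval, contradiction
  have hbdd : BddAbove (G '' Set.Icc T₁ (T₁ + D)) :=
    IsCompact.bddAbove_image isCompact_Icc
      (hGc.mono (fun x hx => le_trans hT₁pos.le hx.1))
  obtain ⟨C, hC⟩ := hbdd
  have hCn : ∀ n : ℕ, 2^n * G₀ ≤ C := by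
    intro n
    obtain ⟨h1, h2, h3⟩ := key n
    have h5 : 0 ≤ D * r^n := mul_nonneg hDnonneg (pow_nonneg hr0.le n)
    have h4 : t n ≤ T₁ + D := by linarith
    exact le_trans h2 (hC ⟨t n, ⟨h1, h4⟩, rfl⟩)
  obtain ⟨n, hbig⟩ := pow_unbounded_of_one_lt (C / G₀) (one_lt_two (α := ℝ))
  rw [div_lt_iff₀ hG₀] at hbig
  have := hCn n
  nlinarith
end

section
/- Let A > 0 and define, for f ∈ L¹([0,A]) and 0 ≤ ρ < A, Tf(ρ) = (A−ρ)^{−1/2} ∫_ρ^A f(r) (r−ρ)^{−1/2} dr. Then T is of weak type (1,1) uniformly in A: there exists an absolute constant C > 0, independent of A, such that for every f ∈ L¹([0,A]) and every α > 0, the Lebesgue measure of {ρ ∈ [0,A] : |Tf(ρ)| > α} is at most C ‖f‖_{L¹([0,A])} / α. -/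
open MeasureTheory
open scoped ENNReal

lemma rpow_neg_half_eq' (t : ℝ) (ht : 0 ≤ t) : t ^ (-(1:ℝ)/2) = (Real.sqrt t)⁻¹ := by
  rw [Real.sqrt_eq_rpow, neg_div, Real.rpow_neg ht]

lemma kernel_lintegral' (r δ : ℝ) (hδ : 0 ≤ δ) :
    ∫⁻ ρ in Set.Ioo (r - δ) r, ENNReal.ofReal ((r - ρ) ^ (-(1:ℝ)/2))
      = ENNReal.ofReal (2 * Real.sqrt δ) := by
  have hle : r - δ ≤ r := by linarith
  have hInt : IntervalIntegrable (fun ρ : ℝ => (r - ρ) ^ (-(1:ℝ)/2)) volume (r - δ) r := by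
    have h0 : IntervalIntegrable (fun x : ℝ => x ^ (-(1:ℝ)/2)) volume 0 δ :=
      intervalIntegral.intervalIntegrable_rpow' (by norm_num)
    have h1 := (h0.comp_sub_left r).symm
    simpa using h1
  have hIoo : IntegrableOn (fun ρ : ℝ => (r - ρ) ^ (-(1:ℝ)/2)) (Set.Ioo (r - δ) r) volume :=
    (intervalIntegrable_iff_integrableOn_Ioo_of_le hle).1 hInt
  have hae : 0 ≤ᵐ[volume.restrict (Set.Ioo (r - δ) r)]
      fun ρ : ℝ => (r - ρ) ^ (-(1:ℝ)/2) := by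
    filter_upwards [ae_restrict_mem measurableSet_Ioo] with ρ hρ
    exact Real.rpow_nonneg (by linarith [hρ.2]) _
  rw [← ofReal_integral_eq_lintegral_ofReal hIoo hae]
  congr 1
  have hcs : (∫ ρ in (r - δ)..r, (r - ρ) ^ (-(1:ℝ)/2)) = ∫ x in (0:ℝ)..δ, x ^ (-(1:ℝ)/2) := by
    have h := intervalIntegral.integral_comp_sub_left (a := r - δ) (b := r)
      (fun x : ℝ => x ^ (-(1:ℝ)/2)) r
    simpa using h
  rw [← integral_Ioc_eq_integral_Ioo, ← intervalIntegral.integral_of_le hle, hcs,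
    integral_rpow (Or.inl (by norm_num)),
    show -(1:ℝ)/2 + 1 = 1/2 by norm_num,
    Real.zero_rpow (by norm_num : (1:ℝ)/2 ≠ 0), Real.sqrt_eq_rpow]
  ring

set_option maxHeartbeats 1000000 in
/-- Weak type `(1,1)` bound, uniform in `A`, for the `n = 2` averaging operator
`Tf(ρ) = (A-ρ)^{-1/2} ∫_ρ^A f(r)(r-ρ)^{-1/2} dr`: there is an absolute constant `C > 0`
such that for every `A > 0`, `f ∈ L¹([0,A])` and `α > 0`,
`|{ρ ∈ [0,A] : |Tf(ρ)| > α}| ≤ C ‖f‖_{L¹([0,A])} / α`. -/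
theorem stmt6 :
    ∃ C > (0 : ℝ), ∀ A : ℝ, 0 < A → ∀ f : ℝ → ℝ, IntegrableOn f (Set.Icc 0 A) volume →
      ∀ α : ℝ, 0 < α →
        volume {ρ ∈ Set.Icc (0 : ℝ) A |
            α < |(A - ρ) ^ (-(1 : ℝ) / 2) * ∫ r in Set.Ioo ρ A, f r * (r - ρ) ^ (-(1 : ℝ) / 2)|}
          ≤ ENNReal.ofReal (C * (∫ r in Set.Icc (0 : ℝ) A, |f r|) / α) := by
  refine ⟨9, by norm_num, ?_⟩
  intro A hA f hf α hα
  set L : ℝ := ∫ r in Set.Icc (0:ℝ) A, |f r| with hLdef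
  have hL0 : 0 ≤ L := integral_nonneg fun r => abs_nonneg _
  clear_value L
  have hfm := hf.aestronglyMeasurable
  set g : ℝ → ℝ := hfm.mk f with hgdef
  have hg_meas : Measurable g := hfm.stronglyMeasurable_mk.measurable
  have hfg : f =ᵐ[volume.restrict (Set.Icc (0:ℝ) A)] g := hfm.ae_eq_mk
  set F : ℝ → ℝ≥0∞ := fun r => ENNReal.ofReal |g r| with hFdef
  have hF_meas : Measurable F := ENNReal.measurable_ofReal.comp hg_meas.abs
  have hFf : (fun r => ENNReal.ofReal |f r|) =ᵐ[volume.restrict (Set.Icc (0:ℝ) A)] F :=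
    hfg.mono fun r hr => by simp only [hFdef, hr]
  set N : ℝ≥0∞ := ∫⁻ r in Set.Icc (0:ℝ) A, F r with hNdef
  have hN : N = ENNReal.ofReal L := by
    rw [hNdef, ← lintegral_congr_ae hFf,
      ← ofReal_integral_eq_lintegral_ofReal hf.abs
        (Filter.Eventually.of_forall fun r => abs_nonneg _), ← hLdef]
  set K : ℝ → ℝ≥0∞ := fun t => ENNReal.ofReal (t ^ (-(1:ℝ)/2)) with hKdef
  have hK_meas : Measurable K := by
    apply ENNReal.measurable_ofReal.comp
    measurability
  set H : ℝ → ℝ≥0∞ := fun ρ => ∫⁻ r in Set.Ioo ρ A, F r * K (r - ρ) with hHdef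
  -- the pointwise key bound
  have hsubIcc : ∀ ρ ∈ Set.Icc (0:ℝ) A, Set.Ioo ρ A ⊆ Set.Icc (0:ℝ) A := fun ρ hρ r hr =>
    ⟨le_of_lt (lt_of_le_of_lt hρ.1 hr.1), le_of_lt hr.2⟩
  have hkey : ∀ ρ ∈ Set.Icc (0:ℝ) A,
      ENNReal.ofReal |(A - ρ) ^ (-(1:ℝ)/2) * ∫ r in Set.Ioo ρ A, f r * (r - ρ) ^ (-(1:ℝ)/2)|
        ≤ ENNReal.ofReal ((A - ρ) ^ (-(1:ℝ)/2)) * H ρ := by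
    intro ρ hρ
    have hAρ : 0 ≤ (A - ρ) ^ (-(1:ℝ)/2) := Real.rpow_nonneg (by linarith [hρ.2]) _
    rw [abs_mul, abs_of_nonneg hAρ, ENNReal.ofReal_mul hAρ]
    refine mul_le_mul_right ?_ _
    calc ENNReal.ofReal |∫ r in Set.Ioo ρ A, f r * (r - ρ) ^ (-(1:ℝ)/2)|
        = (‖∫ r in Set.Ioo ρ A, f r * (r - ρ) ^ (-(1:ℝ)/2)‖₊ : ℝ≥0∞) := by
          rw [← Real.norm_eq_abs, ofReal_norm, enorm_eq_nnnorm]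
      _ ≤ ∫⁻ r in Set.Ioo ρ A, (‖f r * (r - ρ) ^ (-(1:ℝ)/2)‖₊ : ℝ≥0∞) :=
          enorm_integral_le_lintegral_enorm _
      _ = ∫⁻ r in Set.Ioo ρ A, ENNReal.ofReal |f r * (r - ρ) ^ (-(1:ℝ)/2)| := by
          simp_rw [← Real.norm_eq_abs, ofReal_norm, enorm_eq_nnnorm]
      _ = ∫⁻ r in Set.Ioo ρ A, ENNReal.ofReal |f r| * K (r - ρ) := by
          refine setLIntegral_congr_fun measurableSet_Ioo
            (fun r hr => ?_)
          rw [abs_mul, abs_of_nonneg (Real.rpow_nonneg (by linarith [hr.1]) _),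
            ENNReal.ofReal_mul (abs_nonneg _)]
      _ = H ρ := by
          refine lintegral_congr_ae ?_
          refine (ae_restrict_of_ae_restrict_of_subset (hsubIcc ρ hρ)
            (hFf.mono fun r hr => ?_))
          simp only at hr ⊢
          rw [hr]
  rcases eq_or_lt_of_le hL0 with hLz | hL
  · -- zero case
    have habs0 : (fun r => |f r|) =ᵐ[volume.restrict (Set.Icc (0:ℝ) A)] 0 :=
      (integral_eq_zero_iff_of_nonneg (fun r => abs_nonneg _) hf.abs).1 (hLdef ▸ hLz.symm)
    have hF0 : F =ᵐ[volume.restrict (Set.Icc (0:ℝ) A)] 0 := by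
      filter_upwards [habs0, hFf.symm] with r h1 h2
      simp only [Pi.zero_apply] at h1 ⊢
      rw [h2, h1, ENNReal.ofReal_zero]
    have hH0 : ∀ ρ ∈ Set.Icc (0:ℝ) A, H ρ = 0 := by
      intro ρ hρ
      have : (fun r => F r * K (r - ρ)) =ᵐ[volume.restrict (Set.Ioo ρ A)] 0 := by
        refine ae_restrict_of_ae_restrict_of_subset (hsubIcc ρ hρ) (hF0.mono fun r hr => ?_)
        simp only [Pi.zero_apply] at hr ⊢
        rw [hr, zero_mul]
      rw [hHdef]
      simp only
      rw [lintegral_congr_ae this]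
      simp
    have hempty : {ρ | ρ ∈ Set.Icc (0:ℝ) A ∧
        α < |(A - ρ) ^ (-(1:ℝ)/2) * ∫ r in Set.Ioo ρ A, f r * (r - ρ) ^ (-(1:ℝ)/2)|}
        ⊆ (∅ : Set ℝ) := by
      rintro ρ ⟨hρI, hρα⟩
      exfalso
      have h1 : ENNReal.ofReal α
          < ENNReal.ofReal |(A - ρ) ^ (-(1:ℝ)/2) * ∫ r in Set.Ioo ρ A, f r * (r - ρ) ^ (-(1:ℝ)/2)| :=
        (ENNReal.ofReal_lt_ofReal_iff_of_nonneg hα.le).2 hρα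
      have h2 := lt_of_lt_of_le h1 (hkey ρ hρI)
      rw [hH0 ρ hρI, mul_zero] at h2
      exact absurd h2 (by simp)
    calc volume _ ≤ volume (∅ : Set ℝ) := measure_mono hempty
      _ = 0 := measure_empty
      _ ≤ _ := zero_le
  · -- main case : 0 < L
    set s : ℝ := Real.sqrt (α / L) with hsdef
    have hs : 0 < s := Real.sqrt_pos.2 (div_pos hα hL)
    have hs2 : s ^ 2 = α / L := Real.sq_sqrt (div_pos hα hL).le
    set β : ℝ := α / s with hβdef
    have hβ : 0 < β := div_pos hα hs
    set M : ℝ := β / (2 * L) with hMdef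
    have hM : 0 < M := div_pos hβ (by linarith)
    set δ : ℝ := (M⁻¹) ^ 2 with hδdef
    have hδ : 0 < δ := by positivity
    have hsqrtδ : Real.sqrt δ = M⁻¹ := Real.sqrt_sq (by positivity)
    clear_value s β M δ
    set w : ℝ → ℝ → ℝ≥0∞ := fun ρ r =>
      if 0 < r ∧ ρ < r ∧ r < A ∧ r - ρ < δ then F r * K (r - ρ) else 0 with hwdef
    have hw_meas : Measurable (Function.uncurry w) := by
      have heq : Function.uncurry w = fun p : ℝ × ℝ =>
          if 0 < p.2 ∧ p.1 < p.2 ∧ p.2 < A ∧ p.2 - p.1 < δ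
          then F p.2 * K (p.2 - p.1) else 0 := rfl
      rw [heq]
      refine Measurable.ite ?_
        ((hF_meas.comp measurable_snd).mul (hK_meas.comp (measurable_snd.sub measurable_fst)))
        measurable_const
      simp only [Set.setOf_and]
      exact ((measurableSet_lt measurable_const measurable_snd).inter
        ((measurableSet_lt measurable_fst measurable_snd).inter
        ((measurableSet_lt measurable_snd measurable_const).inter
        (measurableSet_lt (measurable_snd.sub measurable_fst) measurable_const))))
    set H2 : ℝ → ℝ≥0∞ := fun ρ => ∫⁻ r, w ρ r with hH2def
    have hH2_meas : Measurable H2 := hw_meas.lintegral_prod_right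
    have hδM : ∀ t : ℝ, δ ≤ t → t ^ (-(1:ℝ)/2) ≤ M := by
      intro t ht
      rw [rpow_neg_half_eq' t (le_trans hδ.le ht)]
      have h1 : M⁻¹ ≤ Real.sqrt t := by rw [← hsqrtδ]; exact Real.sqrt_le_sqrt ht
      calc (Real.sqrt t)⁻¹ ≤ (M⁻¹)⁻¹ := inv_anti₀ (by positivity) h1
        _ = M := inv_inv M
    have hLM : L * M = β / 2 := by rw [hMdef]; field_simp
    have hsplit : ∀ ρ ∈ Set.Icc (0:ℝ) A, H ρ ≤ ENNReal.ofReal (β/2) + H2 ρ := by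
      intro ρ hρ
      have hmono : H ρ ≤ ∫⁻ r in Set.Ioo ρ A, (F r * ENNReal.ofReal M + w ρ r) := by
        refine setLIntegral_mono
          ((hF_meas.mul measurable_const).add hw_meas.of_uncurry_left) ?_
        intro r hr
        by_cases hcase : r - ρ < δ
        · have hw : w ρ r = F r * K (r - ρ) := by
            rw [hwdef]
            exact if_pos ⟨lt_of_le_of_lt hρ.1 hr.1, hr.1, hr.2, hcase⟩
          rw [hw]
          exact le_add_self
        · have hKle : K (r - ρ) ≤ ENNReal.ofReal M :=
            ENNReal.ofReal_le_ofReal (hδM _ (not_lt.1 hcase))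
          exact le_trans (mul_le_mul_right hKle _) (self_le_add_right _ _)
      refine le_trans hmono ?_
      rw [lintegral_add_left (hF_meas.mul_const _)]
      refine add_le_add ?_ (setLIntegral_le_lintegral _ _)
      calc ∫⁻ r in Set.Ioo ρ A, F r * ENNReal.ofReal M
          = (∫⁻ r in Set.Ioo ρ A, F r) * ENNReal.ofReal M := lintegral_mul_const _ hF_meas
        _ ≤ N * ENNReal.ofReal M :=
            mul_le_mul_left (lintegral_mono_set (hsubIcc ρ hρ)) _
        _ = ENNReal.ofReal (β/2) := by
            rw [hN, ← ENNReal.ofReal_mul hL0, hLM]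
    have hH2int : ∫⁻ ρ in Set.Icc (0:ℝ) A, H2 ρ ≤ ENNReal.ofReal (2 * M⁻¹) * N := by
      have h3 : ∀ r : ℝ, (∫⁻ ρ, w ρ r)
          ≤ (Set.Ioo (0:ℝ) A).indicator (fun r' => ENNReal.ofReal (2 * M⁻¹) * F r') r := by
        intro r
        by_cases hr : r ∈ Set.Ioo (0:ℝ) A
        · rw [Set.indicator_of_mem hr]
          calc ∫⁻ ρ, w ρ r
              ≤ ∫⁻ ρ, (Set.Ioo (r - δ) r).indicator (fun ρ' => F r * K (r - ρ')) ρ := by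
                refine lintegral_mono fun ρ => ?_
                rw [hwdef]
                simp only
                split_ifs with hcond
                · rw [Set.indicator_of_mem (Set.mem_Ioo.2 ⟨by linarith [hcond.2.2.2], hcond.2.1⟩)]
                · exact zero_le
            _ = ∫⁻ ρ in Set.Ioo (r - δ) r, F r * K (r - ρ) :=
                lintegral_indicator measurableSet_Ioo _
            _ = F r * ∫⁻ ρ in Set.Ioo (r - δ) r, K (r - ρ) :=
                lintegral_const_mul _ (hK_meas.comp (measurable_const.sub measurable_id))
            _ = F r * ENNReal.ofReal (2 * Real.sqrt δ) := by
                rw [hKdef]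
                simp only
                rw [kernel_lintegral' r δ hδ.le]
            _ = ENNReal.ofReal (2 * M⁻¹) * F r := by rw [hsqrtδ, mul_comm]
        · rw [Set.indicator_of_notMem hr]
          have hz : ∀ ρ, w ρ r = 0 := by
            intro ρ
            rw [hwdef]
            refine if_neg ?_
            rintro ⟨h1', h2', h3', h4'⟩
            exact hr ⟨h1', h3'⟩
          simp [hz]
      calc ∫⁻ ρ in Set.Icc (0:ℝ) A, H2 ρ ≤ ∫⁻ ρ, H2 ρ := setLIntegral_le_lintegral _ _
        _ = ∫⁻ r, ∫⁻ ρ, w ρ r := lintegral_lintegral_swap hw_meas.aemeasurable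
        _ ≤ ∫⁻ r, (Set.Ioo (0:ℝ) A).indicator (fun r' => ENNReal.ofReal (2 * M⁻¹) * F r') r :=
            lintegral_mono h3
        _ = ∫⁻ r in Set.Ioo (0:ℝ) A, ENNReal.ofReal (2 * M⁻¹) * F r :=
            lintegral_indicator measurableSet_Ioo _
        _ = ENNReal.ofReal (2 * M⁻¹) * ∫⁻ r in Set.Ioo (0:ℝ) A, F r :=
            lintegral_const_mul _ hF_meas
        _ ≤ ENNReal.ofReal (2 * M⁻¹) * N :=
            mul_le_mul_right (lintegral_mono_set Set.Ioo_subset_Icc_self) _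
    -- Chebyshev for the T2 part
    have hβsq : β ^ 2 = α * L := by
      rw [hβdef, div_pow, hs2]
      field_simp
    have hT2 : volume {ρ | ρ ∈ Set.Icc (0:ℝ) A ∧ ENNReal.ofReal (β/2) < H2 ρ}
        ≤ ENNReal.ofReal (8 * L / α) := by
      have hmeas : MeasurableSet {ρ : ℝ | ENNReal.ofReal (β/2) ≤ H2 ρ} :=
        measurableSet_le measurable_const hH2_meas
      have hsub : {ρ | ρ ∈ Set.Icc (0:ℝ) A ∧ ENNReal.ofReal (β/2) < H2 ρ}
          ⊆ {ρ : ℝ | ENNReal.ofReal (β/2) ≤ H2 ρ} ∩ Set.Icc (0:ℝ) A :=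
        fun ρ hρ => ⟨hρ.2.le, hρ.1⟩
      have hne : ENNReal.ofReal (β/2) ≠ 0 := by
        simp only [ne_eq, ENNReal.ofReal_eq_zero, not_le]
        linarith
      calc volume {ρ | ρ ∈ Set.Icc (0:ℝ) A ∧ ENNReal.ofReal (β/2) < H2 ρ}
          ≤ volume ({ρ : ℝ | ENNReal.ofReal (β/2) ≤ H2 ρ} ∩ Set.Icc (0:ℝ) A) :=
            measure_mono hsub
        _ = (volume.restrict (Set.Icc (0:ℝ) A)) {ρ : ℝ | ENNReal.ofReal (β/2) ≤ H2 ρ} :=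
            (Measure.restrict_apply hmeas).symm
        _ ≤ (∫⁻ ρ in Set.Icc (0:ℝ) A, H2 ρ) / ENNReal.ofReal (β/2) :=
            meas_ge_le_lintegral_div hH2_meas.aemeasurable hne ENNReal.ofReal_ne_top
        _ ≤ (ENNReal.ofReal (2 * M⁻¹) * N) / ENNReal.ofReal (β/2) := by
            exact ENNReal.div_le_div_right hH2int _
        _ = ENNReal.ofReal ((2 * M⁻¹ * L) / (β/2)) := by
            rw [hN, ← ENNReal.ofReal_mul (by positivity),
              ← ENNReal.ofReal_div_of_pos (by linarith : (0:ℝ) < β/2)]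
        _ = ENNReal.ofReal (8 * L / α) := by
            congr 1
            have hMinv : M⁻¹ = 2 * L / β := by
              rw [hMdef]
              field_simp
            rw [hMinv]
            rw [div_eq_div_iff (by positivity) (by positivity)]
            field_simp
            nlinarith [hβsq, hβ, hα, hL]
    have hT1 : volume (Set.Ioc (A - L/α) A) ≤ ENNReal.ofReal (L / α) := by
      rw [Real.volume_Ioc]
      exact le_of_eq (by congr 1; ring)
    have hincl : {ρ | ρ ∈ Set.Icc (0:ℝ) A ∧
        α < |(A - ρ) ^ (-(1:ℝ)/2) * ∫ r in Set.Ioo ρ A, f r * (r - ρ) ^ (-(1:ℝ)/2)|}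
        ⊆ Set.Ioc (A - L/α) A
          ∪ {ρ | ρ ∈ Set.Icc (0:ℝ) A ∧ ENNReal.ofReal (β/2) < H2 ρ} := by
      rintro ρ ⟨hρI, hρα⟩
      by_cases h1 : A - L/α < ρ
      · exact Or.inl ⟨h1, hρI.2⟩
      · refine Or.inr ⟨hρI, ?_⟩
        by_contra hcon
        push_neg at hcon
        have hαlt : ENNReal.ofReal α < ENNReal.ofReal ((A - ρ) ^ (-(1:ℝ)/2)) * H ρ :=
          lt_of_lt_of_le ((ENNReal.ofReal_lt_ofReal_iff_of_nonneg hα.le).2 hρα) (hkey ρ hρI)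
        have hHle : H ρ ≤ ENNReal.ofReal β := by
          calc H ρ ≤ ENNReal.ofReal (β/2) + H2 ρ := hsplit ρ hρI
            _ ≤ ENNReal.ofReal (β/2) + ENNReal.ofReal (β/2) := add_le_add_right hcon _
            _ = ENNReal.ofReal β := by
                rw [← ENNReal.ofReal_add (by linarith) (by linarith)]
                norm_num
        have hgle : (A - ρ) ^ (-(1:ℝ)/2) ≤ s := by
          have hAρ : L/α ≤ A - ρ := by linarith [not_lt.1 h1]
          have hpos : 0 < L/α := div_pos hL hα
          rw [rpow_neg_half_eq' _ (by linarith)]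
          have h2 : Real.sqrt (L/α) ≤ Real.sqrt (A - ρ) := Real.sqrt_le_sqrt hAρ
          have h3 : Real.sqrt (L/α) = s⁻¹ := by
            rw [hsdef, show L/α = (α/L)⁻¹ by rw [inv_div], Real.sqrt_inv]
          rw [h3] at h2
          calc (Real.sqrt (A - ρ))⁻¹ ≤ (s⁻¹)⁻¹ := inv_anti₀ (by positivity) h2
            _ = s := inv_inv s
        have hle2 : ENNReal.ofReal ((A - ρ) ^ (-(1:ℝ)/2)) * H ρ ≤ ENNReal.ofReal α := by
          calc ENNReal.ofReal ((A - ρ) ^ (-(1:ℝ)/2)) * H ρ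
              ≤ ENNReal.ofReal s * ENNReal.ofReal β :=
                mul_le_mul' (ENNReal.ofReal_le_ofReal hgle) hHle
            _ = ENNReal.ofReal (s * β) := (ENNReal.ofReal_mul hs.le).symm
            _ = ENNReal.ofReal α := by
                rw [hβdef]
                congr 1
                field_simp
        exact absurd (lt_of_lt_of_le hαlt hle2) (lt_irrefl _)
    calc volume {ρ | ρ ∈ Set.Icc (0:ℝ) A ∧
          α < |(A - ρ) ^ (-(1:ℝ)/2) * ∫ r in Set.Ioo ρ A, f r * (r - ρ) ^ (-(1:ℝ)/2)|}
        ≤ volume (Set.Ioc (A - L/α) A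
            ∪ {ρ | ρ ∈ Set.Icc (0:ℝ) A ∧ ENNReal.ofReal (β/2) < H2 ρ}) := measure_mono hincl
      _ ≤ volume (Set.Ioc (A - L/α) A)
            + volume {ρ | ρ ∈ Set.Icc (0:ℝ) A ∧ ENNReal.ofReal (β/2) < H2 ρ} :=
          measure_union_le _ _
      _ ≤ ENNReal.ofReal (L/α) + ENNReal.ofReal (8 * L / α) := add_le_add hT1 hT2
      _ = ENNReal.ofReal (9 * L / α) := by
          rw [← ENNReal.ofReal_add (by positivity) (by positivity),
            show L/α + 8 * L / α = 9 * L / α by ring]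
end

section
/- Let 1 < p < ∞. There exists a constant C_p > 0, independent of A, such that for every A > 0 and every f ∈ L^p([0,A]), the function Tf(ρ) = (A−ρ)^{−1/2} ∫_ρ^A f(r) (r−ρ)^{−1/2} dr (0 ≤ ρ < A) satisfies ‖Tf‖_{L^p([0,A])} ≤ C_p ‖f‖_{L^p([0,A])}. -/
open MeasureTheory Set
open scoped ENNReal NNReal

namespace Stmt7Aux

/-- Substitution `x ↦ r - x` for lintegrals. -/
lemma lint_sub_left (r : ℝ) (F : ℝ → ℝ≥0∞) (s : Set ℝ) :
    ∫⁻ x in ((fun x : ℝ => r - x) ⁻¹' s), F (r - x) = ∫⁻ u in s, F u :=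
  (Measure.measurePreserving_sub_left volume r).setLIntegral_comp_preimage_emb
    (IsometryEquiv.subLeft r).toHomeomorph.measurableEmbedding F s

/-- Substitution `x ↦ x - a` for lintegrals. -/
lemma lint_sub_right (a : ℝ) (F : ℝ → ℝ≥0∞) (s : Set ℝ) :
    ∫⁻ x in ((fun x : ℝ => x - a) ⁻¹' s), F (x - a) = ∫⁻ u in s, F u :=
  (measurePreserving_sub_right volume a).setLIntegral_comp_preimage_emb
    (IsometryEquiv.subRight a).toHomeomorph.measurableEmbedding F s

/-- base computation on `(0,d)` -/
lemma lint_rpow_Ioo (d c : ℝ) (hd : 0 ≤ d) (hc : -1 < c) :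
    ∫⁻ u in Ioo 0 d, ENNReal.ofReal (u ^ c) = ENNReal.ofReal (d ^ (c + 1) / (c + 1)) := by
  have hI : IntervalIntegrable (fun u : ℝ => u ^ c) volume 0 d :=
    intervalIntegral.intervalIntegrable_rpow' hc
  have hInt : IntegrableOn (fun u : ℝ => u ^ c) (Ioo 0 d) volume :=
    hI.1.mono_set Ioo_subset_Ioc_self
  have hnn : 0 ≤ᵐ[volume.restrict (Ioo 0 d)] fun u : ℝ => u ^ c := by
    filter_upwards [ae_restrict_mem measurableSet_Ioo] with u hu
    exact Real.rpow_nonneg hu.1.le _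
  rw [← ofReal_integral_eq_lintegral_ofReal hInt hnn]
  congr 1
  rw [← integral_Ioc_eq_integral_Ioo, ← intervalIntegral.integral_of_le hd,
    integral_rpow (Or.inl hc), Real.zero_rpow (by linarith), sub_zero]

/-- base computation on `(e,∞)` -/
lemma lint_rpow_Ioi (e c : ℝ) (he : 0 < e) (hc : c < -1) :
    ∫⁻ u in Ioi e, ENNReal.ofReal (u ^ c) = ENNReal.ofReal (-e ^ (c + 1) / (c + 1)) := by
  have hnn : 0 ≤ᵐ[volume.restrict (Ioi e)] fun u : ℝ => u ^ c := by
    filter_upwards [ae_restrict_mem measurableSet_Ioi] with u hu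
    exact Real.rpow_nonneg (he.le.trans hu.le) _
  rw [← ofReal_integral_eq_lintegral_ofReal (integrableOn_Ioi_rpow_of_lt hc he) hnn]
  rw [integral_Ioi_rpow_of_lt hc he]

/-- `∫⁻_{(a,m)} (x-a)^c dx` -/
lemma lint_left (a m c : ℝ) (ham : a ≤ m) (hc : -1 < c) :
    ∫⁻ x in Ioo a m, ENNReal.ofReal ((x - a) ^ c)
      = ENNReal.ofReal ((m - a) ^ (c + 1) / (c + 1)) := by
  have hpre : Ioo a m = (fun x : ℝ => x - a) ⁻¹' (Ioo 0 (m - a)) := by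
    ext x; simp only [mem_Ioo, mem_preimage]
    constructor <;> intro h <;> constructor <;> linarith [h.1, h.2]
  rw [hpre, lint_sub_right a (fun u => ENNReal.ofReal (u ^ c)),
    lint_rpow_Ioo _ _ (by linarith) hc]

/-- `∫⁻_{(m,r)} (r-x)^c dx` -/
lemma lint_right (m r c : ℝ) (hmr : m ≤ r) (hc : -1 < c) :
    ∫⁻ x in Ioo m r, ENNReal.ofReal ((r - x) ^ c)
      = ENNReal.ofReal ((r - m) ^ (c + 1) / (c + 1)) := by
  have hpre : Ioo m r = (fun x : ℝ => r - x) ⁻¹' (Ioo 0 (r - m)) := by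
    ext x; simp only [mem_Ioo, mem_preimage]
    constructor <;> intro h <;> constructor <;> linarith [h.1, h.2]
  rw [hpre, lint_sub_left r (fun u => ENNReal.ofReal (u ^ c)),
    lint_rpow_Ioo _ _ (by linarith) hc]

/-- `∫⁻_{(-∞,m)} (r-x)^c dx` for `c < -1`. -/
lemma lint_tail (m r c : ℝ) (hmr : m < r) (hc : c < -1) :
    ∫⁻ x in Iio m, ENNReal.ofReal ((r - x) ^ c)
      = ENNReal.ofReal (-(r - m) ^ (c + 1) / (c + 1)) := by
  have hpre : Iio m = (fun x : ℝ => r - x) ⁻¹' (Ioi (r - m)) := by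
    ext x; simp only [mem_Iio, mem_preimage, mem_Ioi]
    constructor <;> intro h <;> linarith
  rw [hpre, lint_sub_left r (fun u => ENNReal.ofReal (u ^ c)),
    lint_rpow_Ioi _ _ (by linarith) hc]

lemma L1 {rho A : ℝ} (h : rho < A) :
    ∫⁻ r in Ioo rho A, ENNReal.ofReal ((r - rho) ^ (-(1:ℝ)/2) * (A - r) ^ (-(1:ℝ)/2))
      ≤ ENNReal.ofReal 4 := by
  set m := (rho + A) / 2 with hm
  have hρm : rho < m := by rw [hm]; linarith
  have hmA : m < A := by rw [hm]; linarith
  have hd : (0:ℝ) < m - rho := by linarith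
  have hd' : (0:ℝ) < A - m := by linarith
  have key : A - m = m - rho := by rw [hm]; ring
  have hsub : Ioo rho A ⊆ Ioo rho m ∪ Ico m A := by
    intro x hx
    rcases lt_or_ge x m with h1 | h1
    · exact Or.inl ⟨hx.1, h1⟩
    · exact Or.inr ⟨h1, hx.2⟩
  refine le_trans (lintegral_mono_set hsub) (le_trans (lintegral_union_le _ _ _) ?_)
  have hmul : (m - rho) ^ (-(1:ℝ)/2) * (m - rho) ^ ((1:ℝ)/2) = 1 := by
    rw [← Real.rpow_add hd]; norm_num
  have half1 : ∫⁻ r in Ioo rho m,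
      ENNReal.ofReal ((r - rho) ^ (-(1:ℝ)/2) * (A - r) ^ (-(1:ℝ)/2)) ≤ ENNReal.ofReal 2 := by
    have hmono : ∫⁻ r in Ioo rho m,
        ENNReal.ofReal ((r - rho) ^ (-(1:ℝ)/2) * (A - r) ^ (-(1:ℝ)/2))
        ≤ ∫⁻ r in Ioo rho m,
          ENNReal.ofReal ((A - m) ^ (-(1:ℝ)/2) * (r - rho) ^ (-(1:ℝ)/2)) := by
      refine lintegral_mono_ae ?_
      filter_upwards [ae_restrict_mem measurableSet_Ioo] with r hr
      refine ENNReal.ofReal_le_ofReal ?_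
      rw [mul_comm]
      have h2 : (A - r) ^ (-(1:ℝ)/2) ≤ (A - m) ^ (-(1:ℝ)/2) :=
        Real.rpow_le_rpow_of_nonpos hd' (by linarith [hr.2]) (by norm_num)
      exact mul_le_mul_of_nonneg_right h2
        (Real.rpow_nonneg (by linarith [hr.1] : (0:ℝ) ≤ r - rho) _)
    refine hmono.trans ?_
    rw [show (fun r : ℝ => ENNReal.ofReal ((A - m) ^ (-(1:ℝ)/2) * (r - rho) ^ (-(1:ℝ)/2)))
        = fun r : ℝ => ENNReal.ofReal ((A - m) ^ (-(1:ℝ)/2))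
            * ENNReal.ofReal ((r - rho) ^ (-(1:ℝ)/2))
        from funext fun r => ENNReal.ofReal_mul (Real.rpow_nonneg hd'.le _)]
    rw [lintegral_const_mul' _ _ ENNReal.ofReal_ne_top,
      lint_left rho m _ hρm.le (by norm_num),
      ← ENNReal.ofReal_mul (Real.rpow_nonneg hd'.le _)]
    refine ENNReal.ofReal_le_ofReal ?_
    rw [key, show (-(1:ℝ)/2 + 1) = 1/2 by norm_num]
    have expand : (m - rho) ^ (-(1:ℝ)/2) * ((m - rho) ^ ((1:ℝ)/2) / (1/2))
        = ((m - rho) ^ (-(1:ℝ)/2) * (m - rho) ^ ((1:ℝ)/2)) * 2 := by ring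
    rw [expand, hmul]; norm_num
  have half2 : ∫⁻ r in Ico m A,
      ENNReal.ofReal ((r - rho) ^ (-(1:ℝ)/2) * (A - r) ^ (-(1:ℝ)/2)) ≤ ENNReal.ofReal 2 := by
    rw [← setLIntegral_congr (Ioo_ae_eq_Ico (μ := volume) (a := m) (b := A))]
    have hmono : ∫⁻ r in Ioo m A,
        ENNReal.ofReal ((r - rho) ^ (-(1:ℝ)/2) * (A - r) ^ (-(1:ℝ)/2))
        ≤ ∫⁻ r in Ioo m A,
          ENNReal.ofReal ((m - rho) ^ (-(1:ℝ)/2) * (A - r) ^ (-(1:ℝ)/2)) := by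
      refine lintegral_mono_ae ?_
      filter_upwards [ae_restrict_mem measurableSet_Ioo] with r hr
      refine ENNReal.ofReal_le_ofReal ?_
      have h2 : (r - rho) ^ (-(1:ℝ)/2) ≤ (m - rho) ^ (-(1:ℝ)/2) :=
        Real.rpow_le_rpow_of_nonpos hd (by linarith [hr.1]) (by norm_num)
      exact mul_le_mul_of_nonneg_right h2 (Real.rpow_nonneg (by linarith [hr.2]) _)
    refine hmono.trans ?_
    rw [show (fun r : ℝ => ENNReal.ofReal ((m - rho) ^ (-(1:ℝ)/2) * (A - r) ^ (-(1:ℝ)/2)))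
        = fun r : ℝ => ENNReal.ofReal ((m - rho) ^ (-(1:ℝ)/2))
            * ENNReal.ofReal ((A - r) ^ (-(1:ℝ)/2))
        from funext fun r => ENNReal.ofReal_mul (Real.rpow_nonneg hd.le _)]
    rw [lintegral_const_mul' _ _ ENNReal.ofReal_ne_top,
      lint_right m A _ hmA.le (by norm_num),
      ← ENNReal.ofReal_mul (Real.rpow_nonneg hd.le _)]
    refine ENNReal.ofReal_le_ofReal ?_
    rw [key, show (-(1:ℝ)/2 + 1) = 1/2 by norm_num]
    have expand : (m - rho) ^ (-(1:ℝ)/2) * ((m - rho) ^ ((1:ℝ)/2) / (1/2))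
        = ((m - rho) ^ (-(1:ℝ)/2) * (m - rho) ^ ((1:ℝ)/2)) * 2 := by ring
    rw [expand, hmul]; norm_num
  refine (add_le_add half1 half2).trans ?_
  rw [← ENNReal.ofReal_add (by norm_num) (by norm_num)]
  norm_num

lemma L2 {p r A : ℝ} (hp : 1 < p) (h : r < A) :
    ∫⁻ rho in Iio r, ENNReal.ofReal ((A - rho) ^ (-(p/2)) * (r - rho) ^ (-(1:ℝ)/2))
      ≤ ENNReal.ofReal ((2 + 2/(p-1)) * (A - r) ^ (-((p-1)/2))) := by
  have he : (0:ℝ) < A - r := by linarith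
  set m := r - (A - r) with hm
  have hmr : m < r := by rw [hm]; linarith
  have hrm : r - m = A - r := by rw [hm]; ring
  have hsub : Iio r ⊆ Iio m ∪ Ico m r := by
    intro x hx
    rcases lt_or_ge x m with h1 | h1
    · exact Or.inl h1
    · exact Or.inr ⟨h1, hx⟩
  refine le_trans (lintegral_mono_set hsub) (le_trans (lintegral_union_le _ _ _) ?_)
  have near : ∫⁻ rho in Ico m r,
      ENNReal.ofReal ((A - rho) ^ (-(p/2)) * (r - rho) ^ (-(1:ℝ)/2))
      ≤ ENNReal.ofReal (2 * (A - r) ^ (-((p-1)/2))) := by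
    rw [← setLIntegral_congr (Ioo_ae_eq_Ico (μ := volume) (a := m) (b := r))]
    have hmono : ∫⁻ rho in Ioo m r,
        ENNReal.ofReal ((A - rho) ^ (-(p/2)) * (r - rho) ^ (-(1:ℝ)/2))
        ≤ ∫⁻ rho in Ioo m r,
          ENNReal.ofReal ((A - r) ^ (-(p/2)) * (r - rho) ^ (-(1:ℝ)/2)) := by
      refine lintegral_mono_ae ?_
      filter_upwards [ae_restrict_mem measurableSet_Ioo] with rho hrho
      refine ENNReal.ofReal_le_ofReal ?_
      have h2 : (A - rho) ^ (-(p/2)) ≤ (A - r) ^ (-(p/2)) :=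
        Real.rpow_le_rpow_of_nonpos he (by linarith [hrho.2]) (by linarith)
      exact mul_le_mul_of_nonneg_right h2 (Real.rpow_nonneg (by linarith [hrho.2]) _)
    refine hmono.trans ?_
    rw [show (fun rho : ℝ => ENNReal.ofReal ((A - r) ^ (-(p/2)) * (r - rho) ^ (-(1:ℝ)/2)))
        = fun rho : ℝ => ENNReal.ofReal ((A - r) ^ (-(p/2)))
            * ENNReal.ofReal ((r - rho) ^ (-(1:ℝ)/2))
        from funext fun rho => ENNReal.ofReal_mul (Real.rpow_nonneg he.le _)]
    rw [lintegral_const_mul' _ _ ENNReal.ofReal_ne_top,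
      lint_right m r _ hmr.le (by norm_num),
      ← ENNReal.ofReal_mul (Real.rpow_nonneg he.le _)]
    refine le_of_eq ?_
    congr 1
    rw [hrm, show (-(1:ℝ)/2 + 1) = 1/2 by norm_num]
    have expand : (A - r) ^ (-(p/2)) * ((A - r) ^ ((1:ℝ)/2) / (1/2))
        = 2 * ((A - r) ^ (-(p/2)) * (A - r) ^ ((1:ℝ)/2)) := by ring
    rw [expand, ← Real.rpow_add he, show (-(p/2) + (1:ℝ)/2) = -((p-1)/2) by ring]
  have far : ∫⁻ rho in Iio m,
      ENNReal.ofReal ((A - rho) ^ (-(p/2)) * (r - rho) ^ (-(1:ℝ)/2))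
      ≤ ENNReal.ofReal ((2/(p-1)) * (A - r) ^ (-((p-1)/2))) := by
    have hmono : ∫⁻ rho in Iio m,
        ENNReal.ofReal ((A - rho) ^ (-(p/2)) * (r - rho) ^ (-(1:ℝ)/2))
        ≤ ∫⁻ rho in Iio m,
          ENNReal.ofReal ((r - rho) ^ (-(p/2) + -(1:ℝ)/2)) := by
      refine lintegral_mono_ae ?_
      filter_upwards [ae_restrict_mem measurableSet_Iio] with rho hrho
      have hu : (0:ℝ) < r - rho := by simp only [mem_Iio] at hrho; linarith
      refine ENNReal.ofReal_le_ofReal ?_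
      rw [Real.rpow_add hu]
      have h2 : (A - rho) ^ (-(p/2)) ≤ (r - rho) ^ (-(p/2)) :=
        Real.rpow_le_rpow_of_nonpos hu (by linarith) (by linarith)
      exact mul_le_mul_of_nonneg_right h2 (Real.rpow_nonneg hu.le _)
    refine hmono.trans ?_
    rw [lint_tail m r _ hmr (by linarith)]
    refine le_of_eq ?_
    congr 1
    rw [hrm, show (-(p/2) + -(1:ℝ)/2 + 1) = -((p-1)/2) by ring]
    have hp1 : p - 1 ≠ 0 := by linarith
    have hp1' : 1 - p ≠ 0 := by linarith
    field_simp
  refine (add_le_add far near).trans ?_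
  rw [← ENNReal.ofReal_add
    (mul_nonneg (div_nonneg (by norm_num) (by linarith)) (Real.rpow_nonneg he.le _))
    (mul_nonneg (by norm_num) (Real.rpow_nonneg he.le _))]
  refine ENNReal.ofReal_le_ofReal (le_of_eq ?_)
  ring

/-- Pointwise Schur/Hölder estimate for the operator at a fixed `rho`. -/
lemma key_pointwise {p q A : ℝ} (hpq : Real.HolderConjugate p q) {rho : ℝ}
    (g : ℝ → ℝ) (hg : Measurable g) (hrhoA : rho < A) :
    (‖(A - rho) ^ (-(1:ℝ)/2) * ∫ r in Ioo rho A, g r * (r - rho) ^ (-(1:ℝ)/2)‖₊ : ℝ≥0∞) ^ p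
      ≤ ENNReal.ofReal ((4:ℝ) ^ (p-1))
        * (ENNReal.ofReal ((A - rho) ^ (-(p/2)))
          * ∫⁻ r in Ioo rho A,
              ENNReal.ofReal ((r - rho) ^ (-(1:ℝ)/2) * (A - r) ^ ((p-1)/2))
                * (‖g r‖₊ : ℝ≥0∞) ^ p) := by
  have hp1 : 1 < p := hpq.lt
  have hp0 : 0 < p := hpq.pos
  have hq0 : 0 < q := hpq.symm.pos
  have hAρ : (0:ℝ) < A - rho := by linarith
  set a : ℝ := (p-1)/(2*p) with ha_def
  set N : ℝ → ℝ≥0∞ := fun r => (‖g r‖₊ : ℝ≥0∞) with hN_def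
  set J : ℝ≥0∞ := ∫⁻ r in Ioo rho A,
      ENNReal.ofReal ((r - rho) ^ (-(1:ℝ)/2) * (A - r) ^ ((p-1)/2)) * N r ^ p with hJ_def
  set I : ℝ≥0∞ := ∫⁻ r in Ioo rho A, ENNReal.ofReal ((r - rho) ^ (-(1:ℝ)/2)) * N r with hI_def
  -- Step 1 : bound the norm by `I`
  have step1 : (‖(A - rho) ^ (-(1:ℝ)/2) * ∫ r in Ioo rho A,
        g r * (r - rho) ^ (-(1:ℝ)/2)‖₊ : ℝ≥0∞)
      ≤ ENNReal.ofReal ((A - rho) ^ (-(1:ℝ)/2)) * I := by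
    rw [nnnorm_mul, ENNReal.coe_mul,
      show ((‖(A - rho) ^ (-(1:ℝ)/2)‖₊ : ℝ≥0∞)) = ENNReal.ofReal ((A - rho) ^ (-(1:ℝ)/2)) from
        Real.enorm_eq_ofReal (Real.rpow_nonneg hAρ.le _)]
    refine mul_le_mul_right ?_ _
    refine le_trans (enorm_integral_le_lintegral_enorm _) (le_of_eq ?_)
    refine lintegral_congr_ae ?_
    filter_upwards [ae_restrict_mem measurableSet_Ioo] with r hr
    change (‖g r * (r - rho) ^ (-(1:ℝ)/2)‖₊ : ℝ≥0∞) = _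
    rw [nnnorm_mul, ENNReal.coe_mul,
      show ((‖(r - rho) ^ (-(1:ℝ)/2)‖₊ : ℝ≥0∞)) = ENNReal.ofReal ((r - rho) ^ (-(1:ℝ)/2)) from
        Real.enorm_eq_ofReal (Real.rpow_nonneg (by linarith [hr.1] : (0:ℝ) ≤ r - rho) _),
      mul_comm]
  -- Step 2 : Hölder
  set g1 : ℝ → ℝ≥0∞ := fun r => ENNReal.ofReal ((r - rho) ^ (-a) * (A - r) ^ (-a)) with hg1_def
  set g2 : ℝ → ℝ≥0∞ :=
    fun r => ENNReal.ofReal ((r - rho) ^ (-(1/(2*p))) * (A - r) ^ a) * N r with hg2_def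
  have hg1m : Measurable g1 :=
    (((measurable_id.sub measurable_const).pow measurable_const).mul
      ((measurable_const.sub measurable_id).pow measurable_const)).ennreal_ofReal
  have hg2m : Measurable g2 :=
    ((((measurable_id.sub measurable_const).pow measurable_const).mul
      ((measurable_const.sub measurable_id).pow measurable_const)).ennreal_ofReal).mul hg.enorm
  have prodeq : ∀ᵐ r ∂(volume.restrict (Ioo rho A)),
      ENNReal.ofReal ((r - rho) ^ (-(1:ℝ)/2)) * N r = (g2 * g1) r := by
    filter_upwards [ae_restrict_mem measurableSet_Ioo] with r hr
    have hu : (0:ℝ) < r - rho := by linarith [hr.1]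
    have hv : (0:ℝ) < A - r := by linarith [hr.2]
    have hx2 : (0:ℝ) ≤ (r - rho) ^ (-(1/(2*p))) * (A - r) ^ a :=
      mul_nonneg (Real.rpow_nonneg hu.le _) (Real.rpow_nonneg hv.le _)
    simp only [hg1_def, hg2_def, Pi.mul_apply]
    rw [mul_comm (ENNReal.ofReal _ * N r) _, ← mul_assoc,
      ← ENNReal.ofReal_mul (mul_nonneg (Real.rpow_nonneg hu.le _) (Real.rpow_nonneg hv.le _))]
    congr 2
    rw [show (r - rho) ^ (-a) * (A - r) ^ (-a) * ((r - rho) ^ (-(1/(2*p))) * (A - r) ^ a)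
        = ((r - rho) ^ (-a) * (r - rho) ^ (-(1/(2*p)))) * ((A - r) ^ (-a) * (A - r) ^ a)
        from by ring,
      ← Real.rpow_add hu, ← Real.rpow_add hv,
      show -a + -(1/(2*p)) = -(1:ℝ)/2 from by rw [ha_def]; field_simp; ring,
      show -a + a = 0 from by ring, Real.rpow_zero, mul_one]
  have F2 : ∫⁻ r in Ioo rho A, g1 r ^ q ≤ ENNReal.ofReal 4 := by
    have : ∀ᵐ r ∂(volume.restrict (Ioo rho A)),
        g1 r ^ q = ENNReal.ofReal ((r - rho) ^ (-(1:ℝ)/2) * (A - r) ^ (-(1:ℝ)/2)) := by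
      filter_upwards [ae_restrict_mem measurableSet_Ioo] with r hr
      have hu : (0:ℝ) < r - rho := by linarith [hr.1]
      have hv : (0:ℝ) < A - r := by linarith [hr.2]
      rw [hg1_def, ENNReal.ofReal_rpow_of_pos
          (mul_pos (Real.rpow_pos_of_pos hu _) (Real.rpow_pos_of_pos hv _)),
        Real.mul_rpow (Real.rpow_nonneg hu.le _) (Real.rpow_nonneg hv.le _),
        ← Real.rpow_mul hu.le, ← Real.rpow_mul hv.le,
        show -a * q = -(1:ℝ)/2 from ?_]
      · rw [ha_def, hpq.conjugate_eq]
        have h1 : p - 1 ≠ 0 := by linarith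
        field_simp
    rw [lintegral_congr_ae this]
    exact L1 hrhoA
  have F1 : ∫⁻ r in Ioo rho A, g2 r ^ p ≤ J := by
    refine le_of_eq (lintegral_congr_ae ?_)
    filter_upwards [ae_restrict_mem measurableSet_Ioo] with r hr
    have hu : (0:ℝ) < r - rho := by linarith [hr.1]
    have hv : (0:ℝ) < A - r := by linarith [hr.2]
    rw [hg2_def, ENNReal.mul_rpow_of_nonneg _ _ hp0.le,
      ENNReal.ofReal_rpow_of_pos
        (mul_pos (Real.rpow_pos_of_pos hu _) (Real.rpow_pos_of_pos hv _)),
      Real.mul_rpow (Real.rpow_nonneg hu.le _) (Real.rpow_nonneg hv.le _),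
      ← Real.rpow_mul hu.le, ← Real.rpow_mul hv.le,
      show -(1/(2*p)) * p = -(1:ℝ)/2 from by field_simp,
      show a * p = (p-1)/2 from by rw [ha_def]; field_simp]
  have step2 : I ≤ J ^ (1/p) * ENNReal.ofReal 4 ^ (1/q) := by
    calc I = ∫⁻ r in Ioo rho A, (g2 * g1) r := lintegral_congr_ae prodeq
    _ ≤ (∫⁻ r in Ioo rho A, g2 r ^ p) ^ (1/p) * (∫⁻ r in Ioo rho A, g1 r ^ q) ^ (1/q) :=
        ENNReal.lintegral_mul_le_Lp_mul_Lq _ hpq hg2m.aemeasurable hg1m.aemeasurable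
    _ ≤ J ^ (1/p) * ENNReal.ofReal 4 ^ (1/q) :=
        mul_le_mul' (ENNReal.rpow_le_rpow F1 (by positivity))
          (ENNReal.rpow_le_rpow F2 (by positivity))
  -- Step 3 : raise to power p
  calc (‖(A - rho) ^ (-(1:ℝ)/2) * ∫ r in Ioo rho A, g r * (r - rho) ^ (-(1:ℝ)/2)‖₊ : ℝ≥0∞) ^ p
      ≤ (ENNReal.ofReal ((A - rho) ^ (-(1:ℝ)/2)) * (J ^ (1/p) * ENNReal.ofReal 4 ^ (1/q))) ^ p :=
        ENNReal.rpow_le_rpow (step1.trans (mul_le_mul_right step2 _)) hp0.le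
    _ = ENNReal.ofReal ((4:ℝ) ^ (p-1)) * (ENNReal.ofReal ((A - rho) ^ (-(p/2))) * J) := by
        rw [ENNReal.mul_rpow_of_nonneg _ _ hp0.le, ENNReal.mul_rpow_of_nonneg _ _ hp0.le,
          ← ENNReal.rpow_mul J, ← ENNReal.rpow_mul (ENNReal.ofReal 4),
          one_div_mul_cancel hp0.ne', ENNReal.rpow_one,
          show 1/q * p = p - 1 from by rw [div_mul_eq_mul_div, one_mul, hpq.div_conj_eq_sub_one],
          ENNReal.ofReal_rpow_of_pos (by norm_num : (0:ℝ) < 4),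
          ENNReal.ofReal_rpow_of_pos (Real.rpow_pos_of_pos hAρ _),
          ← Real.rpow_mul hAρ.le, show -(1:ℝ)/2 * p = -(p/2) from by ring]
        ring

/-- The main `L^p` estimate (p-th powers), for measurable `g`. -/
lemma main_est {p q A : ℝ} (hpq : Real.HolderConjugate p q) (hA : 0 < A) (g : ℝ → ℝ)
    (hg : Measurable g) :
    (∫⁻ rho in Icc 0 A,
        (‖(A - rho) ^ (-(1:ℝ)/2) * ∫ r in Ioo rho A, g r * (r - rho) ^ (-(1:ℝ)/2)‖₊ : ℝ≥0∞) ^ p)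
      ≤ ENNReal.ofReal ((4:ℝ) ^ (p-1) * (2 + 2/(p-1)))
        * ∫⁻ r in Icc 0 A, (‖g r‖₊ : ℝ≥0∞) ^ p := by
  have hp1 : 1 < p := hpq.lt
  have hp0 : 0 < p := hpq.pos
  set b : ℝ := (p-1)/2 with hb_def
  set N : ℝ → ℝ≥0∞ := fun r => (‖g r‖₊ : ℝ≥0∞) with hN_def
  have hN : Measurable N := hg.enorm
  set W : ℝ → ℝ≥0∞ := fun rho => ENNReal.ofReal ((A - rho) ^ (-(p/2))) with hW_def
  set k : ℝ → ℝ → ℝ≥0∞ :=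
    fun rho r => ENNReal.ofReal ((r - rho) ^ (-(1:ℝ)/2) * (A - r) ^ b) with hk_def
  set J : ℝ → ℝ≥0∞ := fun rho => ∫⁻ r in Ioo rho A, k rho r * N r ^ p with hJ_def
  -- Step D : pointwise estimate a.e.
  have hae : ∀ᵐ rho ∂(volume.restrict (Icc 0 A)),
      (‖(A - rho) ^ (-(1:ℝ)/2) * ∫ r in Ioo rho A, g r * (r - rho) ^ (-(1:ℝ)/2)‖₊ : ℝ≥0∞) ^ p
        ≤ ENNReal.ofReal ((4:ℝ) ^ (p-1)) * (W rho * J rho) := by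
    have hne : ∀ᵐ x : ℝ ∂volume, x ∉ ({A} : Set ℝ) :=
      measure_eq_zero_iff_ae_notMem.mp (measure_singleton A)
    filter_upwards [ae_restrict_mem measurableSet_Icc, ae_restrict_of_ae hne] with rho h1 h2
    exact key_pointwise hpq g hg (lt_of_le_of_ne h1.2 fun h => h2 (by simp [h]))
  refine le_trans (lintegral_mono_ae hae) ?_
  rw [lintegral_const_mul' _ _ ENNReal.ofReal_ne_top]
  -- Step E : Tonelli
  set S : ℝ≥0∞ := ∫⁻ rho in Icc 0 A, W rho * J rho with hS_def
  set Phi : ℝ × ℝ → ℝ≥0∞ := fun z =>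
    ({z : ℝ × ℝ | z.1 < z.2 ∧ z.2 < A}).indicator
      (fun z => W z.1 * (k z.1 z.2 * N z.2 ^ p)) z with hPhi_def
  have hPhim : Measurable Phi := by
    refine Measurable.indicator ?_
      ((measurableSet_lt measurable_fst measurable_snd).inter
        (measurableSet_lt measurable_snd measurable_const))
    refine Measurable.mul ?_ (Measurable.mul ?_ ?_)
    · exact ((measurable_const.sub measurable_fst).pow measurable_const).ennreal_ofReal
    · exact (((measurable_snd.sub measurable_fst).pow measurable_const).mul
        ((measurable_const.sub measurable_snd).pow measurable_const)).ennreal_ofReal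
    · exact (hN.comp measurable_snd).pow measurable_const
  have hWJ : ∀ rho : ℝ, W rho * J rho = ∫⁻ r, Phi (rho, r) := by
    intro rho
    rw [hJ_def, ← lintegral_const_mul' _ _ ENNReal.ofReal_ne_top,
      ← lintegral_indicator measurableSet_Ioo]
    refine lintegral_congr fun r => ?_
    simp only [hPhi_def, hW_def, Set.indicator_apply, Set.mem_Ioo, Set.mem_setOf_eq]
  have hswap : S = ∫⁻ r, ∫⁻ rho in Icc 0 A, Phi (rho, r) := by
    rw [hS_def]
    calc ∫⁻ rho in Icc 0 A, W rho * J rho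
        = ∫⁻ rho in Icc 0 A, ∫⁻ r, Phi (rho, r) := lintegral_congr hWJ
      _ = ∫⁻ r, ∫⁻ rho in Icc 0 A, Phi (rho, r) :=
          lintegral_lintegral_swap hPhim.aemeasurable
  have inner_le : ∀ r : ℝ, (∫⁻ rho in Icc 0 A, Phi (rho, r))
      ≤ (Ioo 0 A).indicator (fun r => ENNReal.ofReal (2 + 2/(p-1)) * N r ^ p) r := by
    intro r
    by_cases hr : r ∈ Ioo 0 A
    · rw [Set.indicator_of_mem hr]
      have hr2 : r < A := hr.2
      have hv : (0:ℝ) < A - r := by linarith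
      have hfin : ENNReal.ofReal ((A - r) ^ b) * N r ^ p ≠ ⊤ :=
        ENNReal.mul_ne_top ENNReal.ofReal_ne_top
          (ENNReal.rpow_ne_top_of_nonneg hp0.le ENNReal.coe_ne_top)
      calc ∫⁻ rho in Icc 0 A, Phi (rho, r)
          ≤ ∫⁻ rho, (Iio r).indicator
              (fun rho => W rho * (k rho r * N r ^ p)) rho := by
            refine le_trans (lintegral_mono' Measure.restrict_le_self (le_refl _)) ?_
            refine lintegral_mono fun rho => ?_
            by_cases hcase : rho < r
            · simp [hPhi_def, Set.indicator_apply, Set.mem_setOf_eq, Set.mem_Iio, hcase, hr2]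
            · simp [hPhi_def, Set.indicator_apply, Set.mem_setOf_eq, Set.mem_Iio, hcase]
        _ = ∫⁻ rho in Iio r, W rho * (k rho r * N r ^ p) :=
            lintegral_indicator measurableSet_Iio _
        _ = (ENNReal.ofReal ((A - r) ^ b) * N r ^ p)
              * ∫⁻ rho in Iio r, ENNReal.ofReal ((A - rho) ^ (-(p/2)) * (r - rho) ^ (-(1:ℝ)/2)) := by
            rw [← lintegral_const_mul' _ _ hfin]
            refine lintegral_congr_ae ?_
            filter_upwards [ae_restrict_mem measurableSet_Iio] with rho hrho
            simp only [Set.mem_Iio] at hrho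
            have hu : (0:ℝ) < r - rho := by linarith
            have hAρ : (0:ℝ) < A - rho := by linarith
            show ENNReal.ofReal ((A - rho) ^ (-(p/2)))
                * (ENNReal.ofReal ((r - rho) ^ (-(1:ℝ)/2) * (A - r) ^ b) * N r ^ p) = _
            rw [ENNReal.ofReal_mul (Real.rpow_nonneg hu.le _),
              ENNReal.ofReal_mul (Real.rpow_nonneg hAρ.le _)]
            ring
        _ ≤ (ENNReal.ofReal ((A - r) ^ b) * N r ^ p)
              * ENNReal.ofReal ((2 + 2/(p-1)) * (A - r) ^ (-((p-1)/2))) :=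
            mul_le_mul_right (L2 hp1 hr2) _
        _ = ENNReal.ofReal (2 + 2/(p-1)) * N r ^ p := by
            have hcanc : (A - r) ^ b * ((2 + 2/(p-1)) * (A - r) ^ (-((p-1)/2)))
                = 2 + 2/(p-1) := by
              rw [show (A - r) ^ b * ((2 + 2/(p-1)) * (A - r) ^ (-((p-1)/2)))
                  = (2 + 2/(p-1)) * ((A - r) ^ b * (A - r) ^ (-((p-1)/2))) from by ring,
                ← Real.rpow_add hv, hb_def,
                show (p-1)/2 + -((p-1)/2) = 0 from by ring, Real.rpow_zero, mul_one]
            rw [mul_comm (ENNReal.ofReal ((A - r) ^ b)) (N r ^ p), mul_assoc,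
              ← ENNReal.ofReal_mul (Real.rpow_nonneg hv.le _), hcanc, mul_comm]
    · rw [Set.indicator_of_notMem hr]
      have hz : ∀ᵐ rho ∂(volume.restrict (Icc 0 A)), Phi (rho, r) = 0 := by
        filter_upwards [ae_restrict_mem measurableSet_Icc] with rho hrho
        refine Set.indicator_of_notMem (fun hmem => hr ?_) _
        exact ⟨lt_of_le_of_lt hrho.1 hmem.1, hmem.2⟩
      rw [lintegral_congr_ae hz, lintegral_zero]
  have hS_le : S ≤ ENNReal.ofReal (2 + 2/(p-1)) * ∫⁻ r in Icc 0 A, N r ^ p := by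
    rw [hswap]
    refine le_trans (lintegral_mono inner_le) ?_
    rw [lintegral_indicator measurableSet_Ioo,
      lintegral_const_mul' _ _ ENNReal.ofReal_ne_top]
    exact mul_le_mul_right (lintegral_mono_set Ioo_subset_Icc_self) _
  calc ENNReal.ofReal ((4:ℝ) ^ (p-1)) * S
      ≤ ENNReal.ofReal ((4:ℝ) ^ (p-1))
          * (ENNReal.ofReal (2 + 2/(p-1)) * ∫⁻ r in Icc 0 A, N r ^ p) :=
        mul_le_mul_right hS_le _
    _ = ENNReal.ofReal ((4:ℝ) ^ (p-1) * (2 + 2/(p-1))) * ∫⁻ r in Icc 0 A, N r ^ p := by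
        rw [ENNReal.ofReal_mul (Real.rpow_nonneg (by norm_num) _), mul_assoc]

end Stmt7Aux

open Stmt7Aux in
/-- `L^p` boundedness, uniform in `A`, of the `n = 2` averaging operator
`Tf(ρ) = (A-ρ)^{-1/2} ∫_ρ^A f(r)(r-ρ)^{-1/2} dr` on `[0,A]`, for `1 < p < ∞`. -/
theorem stmt7 (p : ℝ) (hp : 1 < p) :
    ∃ C > (0 : ℝ), ∀ A : ℝ, 0 < A → ∀ f : ℝ → ℝ,
      MemLp f (ENNReal.ofReal p) (volume.restrict (Set.Icc 0 A)) →
      eLpNorm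
        (fun ρ : ℝ => (A - ρ) ^ (-(1 : ℝ) / 2) *
          ∫ r in Set.Ioo ρ A, f r * (r - ρ) ^ (-(1 : ℝ) / 2))
        (ENNReal.ofReal p) (volume.restrict (Set.Icc 0 A))
        ≤ ENNReal.ofReal C * eLpNorm f (ENNReal.ofReal p) (volume.restrict (Set.Icc 0 A)) := by
  have hp0 : 0 < p := by linarith
  have hpq : Real.HolderConjugate p (p / (p - 1)) :=
    (Real.holderConjugate_iff_eq_conjExponent hp).mpr rfl
  have hC2 : (1:ℝ) ≤ 2 + 2/(p-1) := by
    have h1 : (0:ℝ) < 2/(p-1) := div_pos (by norm_num) (by linarith)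
    linarith
  set C : ℝ := 4 * (2 + 2/(p-1)) with hC_def
  have hC0 : 0 < C := by rw [hC_def]; linarith
  refine ⟨C, hC0, ?_⟩
  intro A hA f hf
  have hsm := hf.aestronglyMeasurable
  set g : ℝ → ℝ := hsm.mk f with hg_def
  have hgm : Measurable g := hsm.stronglyMeasurable_mk.measurable
  have hfg : f =ᵐ[volume.restrict (Set.Icc 0 A)] g := hsm.ae_eq_mk
  have hTfg : (fun ρ : ℝ => (A - ρ) ^ (-(1:ℝ)/2) *
        ∫ r in Set.Ioo ρ A, f r * (r - ρ) ^ (-(1:ℝ)/2))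
      =ᵐ[volume.restrict (Set.Icc 0 A)]
      (fun ρ : ℝ => (A - ρ) ^ (-(1:ℝ)/2) *
        ∫ r in Set.Ioo ρ A, g r * (r - ρ) ^ (-(1:ℝ)/2)) := by
    filter_upwards [ae_restrict_mem measurableSet_Icc] with ρ hρ
    have hsub : Set.Ioo ρ A ⊆ Set.Icc 0 A :=
      fun x hx => ⟨le_trans hρ.1 hx.1.le, hx.2.le⟩
    have hfg' : f =ᵐ[volume.restrict (Set.Ioo ρ A)] g :=
      ae_restrict_of_ae_restrict_of_subset hsub hfg
    have heq : (fun r : ℝ => f r * (r - ρ) ^ (-(1:ℝ)/2))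
        =ᵐ[volume.restrict (Set.Ioo ρ A)]
        (fun r : ℝ => g r * (r - ρ) ^ (-(1:ℝ)/2)) := by
      filter_upwards [hfg'] with r hr
      rw [hr]
    rw [integral_congr_ae heq]
  rw [eLpNorm_congr_ae hTfg, eLpNorm_congr_ae hfg]
  have hPne : ENNReal.ofReal p ≠ 0 := by
    simp only [ne_eq, ENNReal.ofReal_eq_zero, not_le]
    linarith
  rw [eLpNorm_eq_lintegral_rpow_enorm_toReal hPne ENNReal.ofReal_ne_top,
    eLpNorm_eq_lintegral_rpow_enorm_toReal hPne ENNReal.ofReal_ne_top,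
    ENNReal.toReal_ofReal hp0.le]
  have hmain := main_est hpq hA g hgm
  have hK_le : (4:ℝ)^(p-1) * (2 + 2/(p-1)) ≤ C ^ p := by
    rw [hC_def, Real.mul_rpow (by norm_num) (by linarith)]
    have h1 : (4:ℝ)^(p-1) ≤ (4:ℝ)^p :=
      Real.rpow_le_rpow_of_exponent_le (by norm_num) (by linarith)
    have h2 : (2 + 2/(p-1)) ≤ (2 + 2/(p-1))^p := by
      have := Real.rpow_le_rpow_of_exponent_le hC2 hp.le
      rwa [Real.rpow_one] at this
    refine mul_le_mul h1 h2 (by linarith) (by positivity)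
  calc (∫⁻ ρ in Set.Icc 0 A,
        (‖(A - ρ) ^ (-(1:ℝ)/2) * ∫ r in Set.Ioo ρ A, g r * (r - ρ) ^ (-(1:ℝ)/2)‖₊ : ℝ≥0∞) ^ p)
          ^ (1/p)
      ≤ (ENNReal.ofReal ((4:ℝ)^(p-1) * (2 + 2/(p-1)))
          * ∫⁻ r in Set.Icc 0 A, (‖g r‖₊ : ℝ≥0∞) ^ p) ^ (1/p) :=
        ENNReal.rpow_le_rpow hmain (by positivity)
    _ = ENNReal.ofReal ((4:ℝ)^(p-1) * (2 + 2/(p-1))) ^ (1/p)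
          * (∫⁻ r in Set.Icc 0 A, (‖g r‖₊ : ℝ≥0∞) ^ p) ^ (1/p) :=
        ENNReal.mul_rpow_of_nonneg _ _ (by positivity)
    _ ≤ ENNReal.ofReal C * (∫⁻ r in Set.Icc 0 A, (‖g r‖₊ : ℝ≥0∞) ^ p) ^ (1/p) := by
        refine mul_le_mul_left ?_ _
        calc ENNReal.ofReal ((4:ℝ)^(p-1) * (2 + 2/(p-1))) ^ (1/p)
            ≤ ENNReal.ofReal (C ^ p) ^ (1/p) :=
              ENNReal.rpow_le_rpow (ENNReal.ofReal_le_ofReal hK_le) (by positivity)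
          _ = ENNReal.ofReal C := by
              rw [ENNReal.ofReal_rpow_of_pos (Real.rpow_pos_of_pos hC0 _),
                ← Real.rpow_mul hC0.le, mul_one_div, div_self hp0.ne', Real.rpow_one]
end
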